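/- arXiv:1812.10563 — 2 statements merged into one kernel-verified Lean document; each statement's English description precedes it below -/
import Mathlib

section
/- Let v₁ > v₂ > ⋯ > v_m > 0, with each v_j independently placed into R with probability 1/2 (else into S). Let ALG be the value selected by the rule: take the smallest element of R strictly exceeding max(S) (with max(∅)=0), and 0 if no such element. Let M = max(R) (0 if R empty). Then E[ALG] ≥ (1/2) E[M]. -/
/-- Maximum of the values assigned to `R` (`c j = true`), with `max ∅ = 0`. -/
noncomputable def maxOfR {m : ℕ} (v : Fin m → ℝ) (c : Fin m → Bool) : ℝ :=
  Finset.univ.fold max 0 (fun j => if c j then v j else 0)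

/-- Maximum of the values assigned to `S` (`c j = false`), with `max ∅ = 0`. -/
noncomputable def maxOfS {m : ℕ} (v : Fin m → ℝ) (c : Fin m → Bool) : ℝ :=
  Finset.univ.fold max 0 (fun j => if c j then 0 else v j)

/-- The indices of values assigned to `R` that strictly exceed `max S`. -/
noncomputable def exceeders {m : ℕ} (v : Fin m → ℝ) (c : Fin m → Bool) :
    Finset (Fin m) :=
  Finset.univ.filter (fun j => c j = true ∧ maxOfS v c < v j)

/-- The algorithm's value: the smallest element of `R` strictly exceeding
`max S` (with `max ∅ = 0`), and `0` if no element of `R` exceeds `max S`. -/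
noncomputable def algValue {m : ℕ} (v : Fin m → ℝ) (c : Fin m → Bool) : ℝ :=
  if h : (exceeders v c).Nonempty then (exceeders v c).inf' h v else 0

namespace Stmt5Aux

lemma fold_max_succ {n : ℕ} (f : Fin (n + 1) → ℝ) :
    Finset.univ.fold max 0 f
      = max (f 0) (Finset.univ.fold max 0 (f ∘ Fin.succ)) := by
  rw [Fin.univ_succ, Finset.fold_cons, Finset.fold_map]
  rfl

lemma fold_max_nonneg {k : ℕ} (f : Fin k → ℝ) : 0 ≤ Finset.univ.fold max 0 f := by
  rw [Finset.le_fold_max]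
  exact Or.inl le_rfl

lemma maxOfR_cons {n : ℕ} (v : Fin (n + 1) → ℝ) (b : Bool) (t : Fin n → Bool) :
    maxOfR v (Fin.cons b t)
      = max (if b then v 0 else 0) (maxOfR (v ∘ Fin.succ) t) := by
  unfold maxOfR
  rw [fold_max_succ]
  simp [Function.comp_def]

lemma maxOfS_cons {n : ℕ} (v : Fin (n + 1) → ℝ) (b : Bool) (t : Fin n → Bool) :
    maxOfS v (Fin.cons b t)
      = max (if b then 0 else v 0) (maxOfS (v ∘ Fin.succ) t) := by
  unfold maxOfS
  rw [fold_max_succ]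
  simp [Function.comp_def]

lemma maxOfS_nonneg {k : ℕ} (v : Fin k → ℝ) (c : Fin k → Bool) : 0 ≤ maxOfS v c :=
  fold_max_nonneg _

lemma maxOfR_nonneg {k : ℕ} (v : Fin k → ℝ) (c : Fin k → Bool) : 0 ≤ maxOfR v c :=
  fold_max_nonneg _

lemma maxOfS_lt {k : ℕ} (v : Fin k → ℝ) (c : Fin k → Bool) {B : ℝ}
    (hB : 0 < B) (hlt : ∀ j, v j < B) : maxOfS v c < B := by
  unfold maxOfS
  rw [Finset.fold_max_lt]
  refine ⟨hB, fun x _ => ?_⟩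
  split <;> [exact hB; exact hlt x]

lemma maxOfR_le {k : ℕ} (v : Fin k → ℝ) (c : Fin k → Bool) {B : ℝ}
    (hB : 0 ≤ B) (hle : ∀ j, v j ≤ B) : maxOfR v c ≤ B := by
  unfold maxOfR
  rw [Finset.fold_max_le]
  refine ⟨hB, fun x _ => ?_⟩
  split <;> [exact hle x; exact hB]

lemma exceeders_cons_false {n : ℕ} (v : Fin (n + 1) → ℝ) (t : Fin n → Bool)
    (hle : ∀ i : Fin n, v i.succ ≤ v 0) :
    exceeders v (Fin.cons false t) = ∅ := by
  ext j
  simp only [exceeders, Finset.mem_filter, Finset.mem_univ, true_and,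
    Finset.notMem_empty, iff_false, not_and]
  intro hj
  induction j using Fin.cases with
  | zero => simp at hj
  | succ i =>
      have h1 : v 0 ≤ maxOfS v (Fin.cons false t) := by
        rw [maxOfS_cons]; simp
      exact not_lt.mpr (le_trans (hle i) h1)

lemma algValue_cons_false {n : ℕ} (v : Fin (n + 1) → ℝ) (t : Fin n → Bool)
    (hle : ∀ i : Fin n, v i.succ ≤ v 0) :
    algValue v (Fin.cons false t) = 0 := by
  rw [algValue, dif_neg]
  rw [exceeders_cons_false v t hle]
  exact fun h => h.ne_empty rfl

lemma exceeders_cons_true {n : ℕ} (v : Fin (n + 1) → ℝ) (t : Fin n → Bool)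
    (h0 : 0 < v 0) (hlt : ∀ i : Fin n, v i.succ < v 0) :
    exceeders v (Fin.cons true t)
      = insert 0 ((exceeders (v ∘ Fin.succ) t).map
          ⟨Fin.succ, Fin.succ_injective n⟩) := by
  have hS : maxOfS v (Fin.cons true t) = maxOfS (v ∘ Fin.succ) t := by
    rw [maxOfS_cons]
    simp [max_eq_right (maxOfS_nonneg _ _)]
  have hSlt : maxOfS (v ∘ Fin.succ) t < v 0 :=
    maxOfS_lt _ _ h0 (fun j => hlt j)
  ext j
  simp only [exceeders, Finset.mem_filter, Finset.mem_univ, true_and,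
    Finset.mem_insert, Finset.mem_map, Function.Embedding.coeFn_mk, hS]
  induction j using Fin.cases with
  | zero => simp [hSlt]
  | succ i =>
      simp only [Fin.cons_succ, Function.comp_apply]
      constructor
      · intro ⟨h1, h2⟩
        exact Or.inr ⟨i, ⟨h1, h2⟩, rfl⟩
      · rintro (h | ⟨a, ha, hai⟩)
        · exact absurd h (Fin.succ_ne_zero i)
        · obtain rfl : a = i := Fin.succ_injective n hai
          exact ha

lemma algValue_cons_true {n : ℕ} (v : Fin (n + 1) → ℝ) (t : Fin n → Bool)
    (h0 : 0 < v 0) (hlt : ∀ i : Fin n, v i.succ < v 0) :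
    algValue v (Fin.cons true t)
      = if (exceeders (v ∘ Fin.succ) t).Nonempty then algValue (v ∘ Fin.succ) t
        else v 0 := by
  have hex := exceeders_cons_true v t h0 hlt
  by_cases h : (exceeders (v ∘ Fin.succ) t).Nonempty
  · obtain ⟨i₀, hi₀⟩ := h
    have hEm : ((exceeders (v ∘ Fin.succ) t).map
        (⟨Fin.succ, Fin.succ_injective n⟩ : Fin n ↪ Fin (n + 1))).Nonempty :=
      ⟨i₀.succ, Finset.mem_map_of_mem _ hi₀⟩
    have hne : (exceeders v (Fin.cons true t)).Nonempty :=
      ⟨0, by rw [hex]; exact Finset.mem_insert_self _ _⟩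
    rw [algValue, dif_pos hne, if_pos ⟨i₀, hi₀⟩, algValue, dif_pos ⟨i₀, hi₀⟩]
    rw [Finset.inf'_congr hne hex (fun _ _ => rfl)]
    rw [Finset.inf'_insert (H := hEm), Finset.inf'_map (hs := hEm)]
    simp only [Function.Embedding.coeFn_mk]
    have hle : (exceeders (v ∘ Fin.succ) t).inf' (Finset.map_nonempty.1 hEm)
        (v ∘ Fin.succ) ≤ v 0 := by
      exact Finset.inf'_le_of_le (f := v ∘ Fin.succ) (b := i₀) hi₀ ((hlt i₀).le)
    rw [inf_eq_right.mpr hle]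
  · have hexe : exceeders (v ∘ Fin.succ) t = ∅ :=
      Finset.not_nonempty_iff_eq_empty.mp h
    have hsing : exceeders v (Fin.cons true t) = {0} := by
      rw [hex, hexe]; simp
    have hne : (exceeders v (Fin.cons true t)).Nonempty := by
      rw [hsing]; exact ⟨0, Finset.mem_singleton_self 0⟩
    rw [algValue, dif_pos hne, if_neg h]
    rw [Finset.inf'_congr hne hsing (fun _ _ => rfl)]
    simp

lemma sum_cons {n : ℕ} (g : (Fin (n + 1) → Bool) → ℝ) :
    ∑ c : Fin (n + 1) → Bool, g c
      = (∑ t : Fin n → Bool, g (Fin.cons false t))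
        + ∑ t : Fin n → Bool, g (Fin.cons true t) := by
  rw [← (Fintype.sum_equiv (Fin.consEquiv (fun _ => Bool))
      (fun p => g (Fin.cons p.1 p.2)) g (fun p => rfl))]
  rw [Fintype.sum_prod_type, Fintype.sum_bool, add_comm]

lemma key : ∀ (m : ℕ) (v : Fin m → ℝ),
    (∀ j, 0 < v j) → (∀ i j : Fin m, i < j → v j < v i) →
    ∑ c : Fin m → Bool, maxOfR v c ≤ 2 * ∑ c : Fin m → Bool, algValue v c := by
  intro m
  induction m with
  | zero =>
      intro v _ _
      have h1 : ∀ c : Fin 0 → Bool, maxOfR v c = 0 := by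
        intro c; simp [maxOfR]
      have h2 : ∀ c : Fin 0 → Bool, algValue v c = 0 := by
        intro c
        rw [algValue, dif_neg]
        simp [exceeders]
      simp [h1, h2]
  | succ n ih =>
      intro v hpos hanti
      set v' : Fin n → ℝ := v ∘ Fin.succ with hv'
      have hpos' : ∀ j, 0 < v' j := fun j => hpos _
      have hanti' : ∀ i j : Fin n, i < j → v' j < v' i := by
        intro i j hij
        exact hanti i.succ j.succ (Fin.succ_lt_succ_iff.mpr hij)
      have hlt0 : ∀ i : Fin n, v i.succ < v 0 :=
        fun i => hanti 0 i.succ (Fin.succ_pos i)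
      have hle0 : ∀ i : Fin n, v i.succ ≤ v 0 := fun i => (hlt0 i).le
      have hIH := ih v' hpos' hanti'
      -- decompose the maxOfR sum
      have hM : ∑ c : Fin (n + 1) → Bool, maxOfR v c
          = (∑ t : Fin n → Bool, maxOfR v' t) + 2 ^ n * v 0 := by
        rw [sum_cons (fun c => maxOfR v c)]
        congr 1
        · refine Finset.sum_congr rfl (fun t _ => ?_)
          rw [maxOfR_cons, ← hv']
          simp [max_eq_right (maxOfR_nonneg v' t)]
        · have : ∀ t : Fin n → Bool, maxOfR v (Fin.cons true t) = v 0 := by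
            intro t
            rw [maxOfR_cons]
            simp only [if_true]
            exact max_eq_left (maxOfR_le v' t (hpos 0).le (fun j => hle0 j))
          rw [Finset.sum_congr rfl (fun t _ => this t)]
          simp [Finset.card_univ, mul_comm]
      -- decompose the algValue sum
      have hz : ∀ t : Fin n → Bool, algValue v (Fin.cons false t) = 0 :=
        fun t => algValue_cons_false v t hle0
      have hA : ∑ c : Fin (n + 1) → Bool, algValue v c
          = (∑ t : Fin n → Bool, algValue v' t)
            + ∑ t : Fin n → Bool,
                (if (exceeders v' t).Nonempty then 0 else v 0) := by
        rw [sum_cons (fun c => algValue v c)]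
        have e1 : ∑ t : Fin n → Bool, algValue v (Fin.cons false t) = 0 :=
          Finset.sum_eq_zero (fun t _ => hz t)
        have e2 : ∑ t : Fin n → Bool, algValue v (Fin.cons true t)
            = ∑ t : Fin n → Bool,
                (algValue v' t + if (exceeders v' t).Nonempty then 0 else v 0) := by
          refine Finset.sum_congr rfl (fun t _ => ?_)
          rw [algValue_cons_true v t (hpos 0) hlt0, ← hv']
          by_cases h : (exceeders v' t).Nonempty
          · simp [h]
          · have h0 : algValue v' t = 0 := by rw [algValue, dif_neg h]
            simp [h, h0]
        rw [e1, e2, zero_add, Finset.sum_add_distrib]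
      -- bound the else-sum
      have hE : (2 : ℝ) ^ n * v 0
          ≤ 2 * ∑ t : Fin n → Bool,
              (if (exceeders v' t).Nonempty then 0 else v 0) := by
        cases n with
        | zero =>
            have hno : ∀ t : Fin 0 → Bool, ¬(exceeders v' t).Nonempty := by
              intro t h
              simp [exceeders] at h
            rw [Finset.sum_congr rfl (fun t _ => if_neg (hno t))]
            rw [Finset.sum_const, Finset.card_univ]
            simp
            linarith [hpos 0]
        | succ k =>
            have hle0' : ∀ i : Fin k, v' i.succ ≤ v' 0 :=
              fun i => (hanti' 0 i.succ (Fin.succ_pos i)).le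
            rw [sum_cons (fun t => if (exceeders v' t).Nonempty then 0 else v 0)]
            have hf : ∀ s : Fin k → Bool,
                (if (exceeders v' (Fin.cons false s)).Nonempty then 0 else v 0)
                  = v 0 := by
              intro s
              rw [if_neg]
              rw [exceeders_cons_false v' s hle0']
              exact fun h => h.ne_empty rfl
            have h1 : ∑ s : Fin k → Bool,
                (if (exceeders v' (Fin.cons false s)).Nonempty then 0 else v 0)
                = 2 ^ k * v 0 := by
              rw [Finset.sum_congr rfl (fun s _ => hf s)]
              simp [Finset.card_univ, mul_comm]
            have h2 : (0 : ℝ) ≤ ∑ s : Fin k → Bool,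
                (if (exceeders v' (Fin.cons true s)).Nonempty then 0 else v 0) := by
              refine Finset.sum_nonneg (fun s _ => ?_)
              split <;> [exact le_rfl; exact (hpos 0).le]
            rw [h1]
            rw [pow_succ]
            nlinarith [hpos 0]
      rw [hM, hA]
      linarith

end Stmt5Aux

/-- Core lemma: for distinct positive values `v 0 > ⋯ > v (m-1)` assigned
independently to `S` or `R` by fair coins, the pessimistic algorithm earns at
least half of the expected maximum of `R` in expectation. -/
theorem stmt5 (m : ℕ) (v : Fin m → ℝ)
    (hpos : ∀ j, 0 < v j)
    (hanti : ∀ i j : Fin m, i < j → v j < v i) :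
    (∑ c : Fin m → Bool, algValue v c) / 2 ^ m
      ≥ (1 / 2) * ((∑ c : Fin m → Bool, maxOfR v c) / 2 ^ m) := by
  have hkey := Stmt5Aux.key m v hpos hanti
  have h2 : (0 : ℝ) < 2 ^ m := by positivity
  have heq : (1 : ℝ) / 2 * ((∑ c : Fin m → Bool, maxOfR v c) / 2 ^ m)
      = ((∑ c : Fin m → Bool, maxOfR v c) / 2) / 2 ^ m := by ring
  rw [ge_iff_le, heq]
  gcongr
  linarith
end

section
/- In the paired coin-flip model with pairs (v_i¹, v_i²), all 2n values distinct, let T be the set of values larger than v_repeat (the first repeated-distribution value in decreasing order). For v ∈ T, the probability over the coin flips that v is the maximum of R equals (1/2)^{|T_v|+1} where T_v = {u ∈ T : u > v}; and the probability that v_repeat is the maximum of R equals (1/2)^{|T|}. -/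
lemma card_fixed {n : ℕ} (A : Finset (Fin n)) (f : Fin n → Bool) :
    (Finset.univ.filter fun c : Fin n → Bool => ∀ i ∈ A, c i = f i).card
      = 2 ^ (n - A.card) := by
  classical
  have hset : (Finset.univ.filter fun c : Fin n → Bool => ∀ i ∈ A, c i = f i)
      = Fintype.piFinset (fun i => if i ∈ A then {f i} else Finset.univ) := by
    ext c
    simp only [Finset.mem_filter, Finset.mem_univ, true_and, Fintype.mem_piFinset]
    constructor
    · intro h i
      split_ifs with hi
      · simp [h i hi]
      · simp
    · intro h i hi
      have := h i
      rw [if_pos hi] at this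
      simpa using this
  rw [hset, Fintype.card_piFinset]
  have h1 : ∀ i : Fin n, (if i ∈ A then ({f i} : Finset Bool) else Finset.univ).card
      = if i ∈ A then 1 else 2 := by
    intro i; split_ifs <;> simp
  rw [Finset.prod_congr rfl (fun i _ => h1 i), Finset.prod_ite]
  simp only [Finset.prod_const, one_pow, one_mul]
  congr 1
  have : (Finset.univ.filter (· ∈ A)).card = A.card := by
    congr 1; ext i; simp
  have h2 : (Finset.univ.filter (¬ · ∈ A)).card + A.card = n := by
    rw [← this]
    rw [add_comm, Finset.card_filter_add_card_filter_not]
    simp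
  omega

lemma card_constraints {n : ℕ} (S : Finset ℝ) (idx : ℝ → Fin n)
    (hinj : Set.InjOn idx S) (b : ℝ → Bool) :
    (Finset.univ.filter fun c : Fin n → Bool => ∀ u ∈ S, c (idx u) = b u).card
      = 2 ^ (n - S.card) := by
  classical
  set f : Fin n → Bool := fun i =>
    if h : ∃ u, u ∈ S ∧ idx u = i then b h.choose else false with hf
  have hset : (Finset.univ.filter fun c : Fin n → Bool => ∀ u ∈ S, c (idx u) = b u)
      = Finset.univ.filter fun c : Fin n → Bool => ∀ i ∈ S.image idx, c i = f i := by
    ext c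
    simp only [Finset.mem_filter, Finset.mem_univ, true_and, Finset.mem_image]
    constructor
    · rintro h i ⟨u, hu, rfl⟩
      have hex : ∃ u', u' ∈ S ∧ idx u' = idx u := ⟨u, hu, rfl⟩
      rw [hf]; simp only [dif_pos hex]
      have hspec := hex.choose_spec
      have : hex.choose = u := hinj hspec.1 hu hspec.2
      rw [this]; exact h u hu
    · intro h u hu
      have hex : ∃ u', u' ∈ S ∧ idx u' = idx u := ⟨u, hu, rfl⟩
      have := h (idx u) ⟨u, hu, rfl⟩
      rw [hf] at this; simp only [dif_pos hex] at this
      have hspec := hex.choose_spec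
      have heq : hex.choose = u := hinj hspec.1 hu hspec.2
      rw [this, heq]
  rw [hset, card_fixed, Finset.card_image_of_injOn hinj]

lemma arith_half (k n : ℕ) (hk : k ≤ n) :
    ((2:ℝ) ^ (n - k)) / 2 ^ n = (1 / 2) ^ k := by
  rw [div_pow, one_pow, div_eq_div_iff (by positivity) (by positivity), one_mul,
    ← pow_add]
  congr 1
  omega


/-- `v_repeat`: scanning the `2n` pairwise-distinct values `w i k` in decreasing
order, the first value whose pair-partner appeared earlier, namely the largest
of the pairwise minima. -/
noncomputable def vRepeat (n : ℕ) (hn : 0 < n) (w : Fin n → Fin 2 → ℝ) : ℝ :=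
  Finset.univ.sup' (Finset.univ_nonempty_iff.mpr ⟨⟨0, hn⟩⟩)
    (fun i => min (w i 0) (w i 1))

/-- The maximum of `R` when the coin vector `c` sends, from each pair `i`,
the value `w i 1` to `R` if `c i` and `w i 0` otherwise. -/
noncomputable def pairedMaxR (n : ℕ) (hn : 0 < n) (w : Fin n → Fin 2 → ℝ)
    (c : Fin n → Bool) : ℝ :=
  Finset.univ.sup' (Finset.univ_nonempty_iff.mpr ⟨⟨0, hn⟩⟩)
    (fun i => w i (if c i then 1 else 0))

/-- `T`: the set of values strictly greater than `v_repeat`. -/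
noncomputable def upperSet (n : ℕ) (hn : 0 < n) (w : Fin n → Fin 2 → ℝ) :
    Finset ℝ :=
  ((Finset.univ : Finset (Fin n × Fin 2)).image fun p => w p.1 p.2).filter
    (fun x => vRepeat n hn w < x)

/-- Probabilities, over the independent fair pair-coins, that a given value is
the maximum of `R`: for `v ∈ T` it is `(1/2)^{|T_v|+1}` where
`T_v = {u ∈ T : u > v}`, and for `v_repeat` it is `(1/2)^{|T|}`. -/
theorem stmt16 (n : ℕ) (hn : 0 < n) (w : Fin n → Fin 2 → ℝ)
    (hdistinct : Function.Injective fun p : Fin n × Fin 2 => w p.1 p.2) :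
    (∀ v ∈ upperSet n hn w,
      ((Finset.univ.filter (fun c : Fin n → Bool =>
          pairedMaxR n hn w c = v)).card : ℝ) / 2 ^ n
        = (1 / 2) ^ (((upperSet n hn w).filter (fun u => v < u)).card + 1)) ∧
    ((Finset.univ.filter (fun c : Fin n → Bool =>
        pairedMaxR n hn w c = vRepeat n hn w)).card : ℝ) / 2 ^ n
      = (1 / 2) ^ (upperSet n hn w).card := by
  classical
  have hne : (Finset.univ : Finset (Fin n)).Nonempty :=
    Finset.univ_nonempty_iff.mpr ⟨⟨0, hn⟩⟩
  set M := vRepeat n hn w with hM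
  set T := upperSet n hn w with hT
  have hmem : ∀ v : ℝ, v ∈ T ↔ (∃ p : Fin n × Fin 2, w p.1 p.2 = v) ∧ M < v := by
    intro v
    rw [hT, upperSet, Finset.mem_filter, ← hM]
    simp only [Finset.mem_image, Finset.mem_univ, true_and]
  set P : ℝ → Fin n × Fin 2 := fun v =>
    if h : ∃ p : Fin n × Fin 2, w p.1 p.2 = v then h.choose else (⟨0, hn⟩, 0)
    with hPdef
  have hP : ∀ v ∈ T, w (P v).1 (P v).2 = v := by
    intro v hv
    have h := ((hmem v).1 hv).1
    rw [hPdef]; simp only [dif_pos h]; exact h.choose_spec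
  have hMlt : ∀ v ∈ T, M < v := fun v hv => ((hmem v).1 hv).2
  have hminle : ∀ i : Fin n, min (w i 0) (w i 1) ≤ M := by
    intro i; rw [hM, vRepeat]
    exact Finset.le_sup' (fun i => min (w i 0) (w i 1)) (Finset.mem_univ i)
  have hub : ∀ (i : Fin n) (k : Fin 2), w i k ≤ M ∨ w i k ∈ T := by
    intro i k
    by_cases h : M < w i k
    · exact Or.inr ((hmem _).2 ⟨⟨(i, k), rfl⟩, h⟩)
    · exact Or.inl (le_of_not_gt h)
  have hfin2 : ∀ k : Fin 2, k = 0 ∨ k = 1 := by decide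
  have hbk : ∀ (bb : Bool) (k : Fin 2),
      ((if bb then (1 : Fin 2) else 0) = k) ↔ bb = decide (k = 1) := by decide
  have hbnot : ∀ a b : Bool, ¬ a = !b → a = b := by decide
  have hpair_eq : ∀ (i : Fin n) (k : Fin 2) (u : ℝ), u ∈ T → w i k = u →
      (i, k) = P u := by
    intro i k u hu h
    exact hdistinct (show w i k = w (P u).1 (P u).2 from h.trans (hP u hu).symm)
  have hpartner : ∀ v ∈ T, ∀ k : Fin 2, k ≠ (P v).2 → w (P v).1 k ≤ M := by
    intro v hv k hk
    have hmin := hminle (P v).1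
    have hvgt := hMlt v hv
    have hvP := hP v hv
    rcases min_le_iff.mp hmin with h0 | h0
    · rcases hfin2 k with rfl | rfl
      · exact h0
      · rcases hfin2 (P v).2 with h2 | h2
        · rw [h2] at hvP; rw [hvP] at h0; exact absurd hvgt (not_lt.mpr h0)
        · exact absurd h2.symm hk
    · rcases hfin2 k with rfl | rfl
      · rcases hfin2 (P v).2 with h2 | h2
        · exact absurd h2.symm hk
        · rw [h2] at hvP; rw [hvP] at h0; exact absurd hvgt (not_lt.mpr h0)
      · exact h0
  have hinjT : Set.InjOn (fun u => (P u).1) ↑T := by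
    intro u hu u' hu' h
    have hu := Finset.mem_coe.mp hu
    have hu' := Finset.mem_coe.mp hu'
    simp only at h
    by_cases hk : (P u).2 = (P u').2
    · have : w (P u).1 (P u).2 = w (P u').1 (P u').2 := by rw [h, hk]
      rw [hP u hu, hP u' hu'] at this
      exact this
    · exfalso
      have hle := hpartner u' hu' (P u).2 hk
      rw [← h, hP u hu] at hle
      exact absurd (hMlt u hu) (not_lt.mpr hle)
  -- a chosen value cannot be a T-value whose coin points away from it
  have hforce : ∀ (c : Fin n → Bool) (i : Fin n),
      w i (if c i then 1 else 0) ∈ T →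
      c (P (w i (if c i then 1 else 0))).1
        = !(decide ((P (w i (if c i then 1 else 0))).2 = 1)) → False := by
    intro c i hmemT hcu
    have hpe := hpair_eq i _ _ hmemT rfl
    have h1' : i = (P (w i (if c i then 1 else 0))).1 := congrArg Prod.fst hpe
    have h2' : (if c i then 1 else 0 : Fin 2)
        = (P (w i (if c i then 1 else 0))).2 := congrArg Prod.snd hpe
    rw [← h1'] at hcu
    have hcs : c i = decide ((P (w i (if c i then 1 else 0))).2 = 1) :=
      (hbk _ _).mp h2'
    have hx := hcs.symm.trans hcu
    simp at hx
  -- a T-value whose coin points to it is chosen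
  have hchosen : ∀ (c : Fin n → Bool) (u : ℝ), u ∈ T →
      c (P u).1 = decide ((P u).2 = 1) →
      w (P u).1 (if c (P u).1 then 1 else 0) = u := by
    intro c u hu hc
    rw [(hbk _ _).mpr hc]
    exact hP u hu
  have hchar1 : ∀ v ∈ T, ∀ c : Fin n → Bool,
      pairedMaxR n hn w c = v ↔
        (c (P v).1 = decide ((P v).2 = 1) ∧
         ∀ u ∈ T, v < u → c (P u).1 = !(decide ((P u).2 = 1))) := by
    intro v hv c
    constructor
    · intro h
      obtain ⟨i, -, hi⟩ :=
        Finset.exists_mem_eq_sup' hne (fun i => w i (if c i then 1 else 0))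
      rw [pairedMaxR] at h
      have hiv : w i (if c i then 1 else 0) = v := by rw [← hi]; exact h
      have hpe := hpair_eq i _ v hv hiv
      refine ⟨?_, ?_⟩
      · have h1' : i = (P v).1 := congrArg Prod.fst hpe
        have h2' : (if c i then 1 else 0 : Fin 2) = (P v).2 := congrArg Prod.snd hpe
        rw [← h1']
        exact (hbk _ _).mp h2'
      · intro u hu hvu
        by_contra hc
        have hcc := hbnot _ _ hc
        have husel := hchosen c u hu hcc
        have hule : u ≤ v := by
          rw [← h]
          have hls := Finset.le_sup' (f := fun i => w i (if c i then 1 else 0))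
            (b := (P u).1) (Finset.mem_univ _)
          rwa [husel] at hls
        exact absurd hvu (not_lt.mpr hule)
    · rintro ⟨h1, h2⟩
      rw [pairedMaxR]
      apply le_antisymm
      · apply Finset.sup'_le
        intro i _
        rcases hub i (if c i then 1 else 0) with hle' | hmemT
        · exact hle'.trans (hMlt v hv).le
        · rcases le_or_gt (w i (if c i then 1 else 0)) v with h' | h'
          · exact h'
          · exact absurd (h2 _ hmemT h') (fun hh => hforce c i hmemT hh)
      · have hls := Finset.le_sup' (f := fun i => w i (if c i then 1 else 0))
          (b := (P v).1) (Finset.mem_univ _)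
        rwa [hchosen c v hv h1] at hls
  have hchar2 : ∀ c : Fin n → Bool,
      pairedMaxR n hn w c = M ↔
        ∀ u ∈ T, c (P u).1 = !(decide ((P u).2 = 1)) := by
    intro c
    constructor
    · intro h u hu
      by_contra hc
      have hcc := hbnot _ _ hc
      have husel := hchosen c u hu hcc
      have hule : u ≤ M := by
        rw [← h, pairedMaxR]
        have hls := Finset.le_sup' (f := fun i => w i (if c i then 1 else 0))
          (b := (P u).1) (Finset.mem_univ _)
        rwa [husel] at hls
      exact absurd (hMlt u hu) (not_lt.mpr hule)
    · intro h
      obtain ⟨i0, -, hi0⟩ :=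
        Finset.exists_mem_eq_sup' hne (fun i => min (w i 0) (w i 1))
      have hM0 : M = min (w i0 0) (w i0 1) := by rw [hM, vRepeat]; exact hi0
      rw [pairedMaxR]
      apply le_antisymm
      · apply Finset.sup'_le
        intro i _
        rcases hub i (if c i then 1 else 0) with hle' | hmemT
        · exact hle'
        · exact absurd (h _ hmemT) (fun hh => hforce c i hmemT hh)
      · have hls := Finset.le_sup' (f := fun i => w i (if c i then 1 else 0))
          (b := i0) (Finset.mem_univ _)
        have hmle : M ≤ w i0 (if c i0 then 1 else 0) := by
          rw [hM0]; cases c i0 <;> simp [min_le_left, min_le_right]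
        exact hmle.trans hls
  have hTn : T.card ≤ n := by
    have := Finset.card_le_card_of_injOn (fun u => (P u).1)
      (fun _ _ => Finset.mem_univ _) hinjT
    simpa using this
  constructor
  · intro v hv
    set Tv := T.filter (fun u => v < u) with hTv
    have hvnot : v ∉ Tv := by simp [hTv]
    set Sv := insert v Tv with hSv
    have hSsub : Sv ⊆ T := by
      rw [hSv]; exact Finset.insert_subset hv (Finset.filter_subset _ _)
    have hfilter_eq :
        Finset.univ.filter (fun c : Fin n → Bool => pairedMaxR n hn w c = v)
          = Finset.univ.filter (fun c : Fin n → Bool => ∀ u ∈ Sv,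
              c (P u).1 = (if u = v then decide ((P v).2 = 1)
                else !(decide ((P u).2 = 1)))) := by
      ext c
      simp only [Finset.mem_filter, Finset.mem_univ, true_and]
      rw [hchar1 v hv c]
      constructor
      · rintro ⟨h1, h2⟩ u hu
        rw [hSv, Finset.mem_insert] at hu
        rcases hu with rfl | hu
        · rw [if_pos rfl]; exact h1
        · rw [hTv, Finset.mem_filter] at hu
          rw [if_neg (ne_of_gt hu.2)]
          exact h2 u hu.1 hu.2
      · intro h
        refine ⟨?_, ?_⟩
        · have := h v (by rw [hSv]; exact Finset.mem_insert_self _ _)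
          rwa [if_pos rfl] at this
        · intro u hu hvu
          have := h u (by
            rw [hSv, Finset.mem_insert]
            right
            rw [hTv, Finset.mem_filter]
            exact ⟨hu, hvu⟩)
          rwa [if_neg (ne_of_gt hvu)] at this
    rw [hfilter_eq,
      card_constraints Sv (fun u => (P u).1)
        (hinjT.mono (Finset.coe_subset.mpr hSsub)) _]
    have hScard : Sv.card = Tv.card + 1 := by
      rw [hSv, Finset.card_insert_of_notMem hvnot]
    have hkn : Tv.card + 1 ≤ n := by
      rw [← hScard]; exact (Finset.card_le_card hSsub).trans hTn
    rw [hScard]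
    push_cast
    exact arith_half _ n hkn
  · have hfilter_eq :
        Finset.univ.filter (fun c : Fin n → Bool => pairedMaxR n hn w c = M)
          = Finset.univ.filter (fun c : Fin n → Bool => ∀ u ∈ T,
              c (P u).1 = !(decide ((P u).2 = 1))) := by
      ext c
      simp only [Finset.mem_filter, Finset.mem_univ, true_and]
      exact hchar2 c
    rw [hfilter_eq, card_constraints T (fun u => (P u).1) hinjT _]
    push_cast
    exact arith_half _ n hTn
end
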